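/- arXiv:1010.3070 — 4 statements merged into one kernel-verified Lean document; each statement's English description precedes it below -/
import Mathlib

section
/- Let p and q be two fixed, distinct odd primes and let A and B be positive integers such that A/(p−1) + B/(q−1) ≥ 1. Then there are infinitely many positive integers N that are simultaneously (p,A)-good and (q,B)-good. -/
namespace EGRS
-- (part1 assumed inlined; for testing, import it via copy)

/-- geometric sum `1 + b + ... + b^(i-1)` -/
def Sg (b i : ℕ) : ℕ := ∑ k ∈ Finset.range i, b ^ k

lemma Sg_zero (b : ℕ) : Sg b 0 = 0 := rfl

lemma Sg_succ (b i : ℕ) : Sg b (i + 1) = Sg b i + b ^ i :=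
  Finset.sum_range_succ _ _

lemma Sg_succ' (b i : ℕ) : Sg b (i + 1) = b * Sg b i + 1 := by
  induction i with
  | zero => simp [Sg]
  | succ i ih =>
    calc Sg b (i+1+1) = Sg b (i+1) + b ^ (i+1) := Sg_succ _ _
      _ = (b * Sg b i + 1) + b ^ i * b := by rw [ih, pow_succ]
      _ = b * (Sg b i + b ^ i) + 1 := by ring
      _ = b * Sg b (i+1) + 1 := by rw [Sg_succ]

lemma Sg_mono (b : ℕ) {i j : ℕ} (h : i ≤ j) : Sg b i ≤ Sg b j :=
  Finset.sum_le_sum_of_subset (Finset.range_subset_range.2 h)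

lemma Sg_pred_mul {b c : ℕ} (hb : b = c + 1) (i : ℕ) : c * Sg b i + 1 = b ^ i := by
  induction i with
  | zero => simp [Sg_zero]
  | succ i ih =>
    rw [Sg_succ', pow_succ]
    calc c * (b * Sg b i + 1) + 1 = b * (c * Sg b i + 1) + (c + 1 - b) := by
          subst hb; ring_nf; omega
      _ = b ^ i * b := by rw [ih]; subst hb; ring_nf; omega

lemma Sg_pos {b i : ℕ} (hi : 1 ≤ i) : 1 ≤ Sg b i := by
  calc 1 = Sg b 1 := by simp [Sg]
    _ ≤ Sg b i := Sg_mono b hi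

lemma pow_le_Sg {b i : ℕ} (hi : 1 ≤ i) : b ^ (i - 1) ≤ Sg b i := by
  obtain ⟨m, rfl⟩ := Nat.exists_eq_add_of_le hi
  rw [Nat.add_comm, Nat.add_sub_cancel, Sg_succ]
  omega

/-- all base-`b` digits of `n` are at most `A` -/
def Good (b A n : ℕ) : Prop := ∀ k, n / b ^ k % b ≤ A

/-- `n` has at most `i` base-`b` digits, all at most `A` -/
def GoodB (b A i n : ℕ) : Prop := n < b ^ i ∧ Good b A n

lemma good_zero (b A : ℕ) : Good b A 0 := fun k => by simp

lemma rep_lt_pow {b A i : ℕ} (hA : A + 2 ≤ b) : A * Sg b i < b ^ i := by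
  have h := Sg_pred_mul (b := b) (c := b - 1) (by omega) i
  have : A * Sg b i ≤ (b - 1) * Sg b i := Nat.mul_le_mul_right _ (by omega)
  omega

lemma good_step {b A d x i : ℕ} (hb : 2 ≤ b) (hA : A + 2 ≤ b) (hd : d ≤ A)
    (hx : x < b ^ i) (hg : Good b A x) : GoodB b A (i + 1) (d * b ^ i + x) := by
  have hlt : d * b ^ i + x < b ^ (i + 1) := by
    have hsm : (d + 1) * b ^ i = d * b ^ i + b ^ i := by ring
    have h1 : d * b ^ i + x < (d + 1) * b ^ i := by omega
    have h2 : (d + 1) * b ^ i ≤ b * b ^ i := Nat.mul_le_mul_right _ (by omega)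
    rw [pow_succ]
    calc d * b ^ i + x < (d+1) * b ^ i := h1
      _ ≤ b * b ^ i := h2
      _ = b ^ i * b := by ring
  refine ⟨hlt, fun k => ?_⟩
  rcases lt_trichotomy k i with hk | rfl | hk
  · obtain ⟨m, rfl⟩ : ∃ m, i = k + (m + 1) := ⟨i - k - 1, by omega⟩
    have he : d * b ^ (k + (m+1)) + x = x + (d * b ^ m * b) * b ^ k := by ring
    rw [he, Nat.add_mul_div_right _ _ (Nat.pow_pos (n := k) (by omega)),
      Nat.add_mul_mod_self_right]
    exact hg k
  · have he : d * b ^ k + x = x + d * b ^ k := by ring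
    rw [he, Nat.add_mul_div_right _ _ (Nat.pow_pos (n := k) (by omega))]
    have hx0 : x / b ^ k = 0 := Nat.div_eq_of_lt hx
    rw [hx0, Nat.zero_add, Nat.mod_eq_of_lt (by omega)]
    exact hd
  · have : d * b ^ i + x < b ^ k := by
      calc d * b ^ i + x < b ^ (i+1) := hlt
        _ ≤ b ^ k := Nat.pow_le_pow_right (by omega) hk
    simp [Nat.div_eq_of_lt this]

lemma goodB_mono {b A i i' n : ℕ} (hb : 1 ≤ b) (h : i ≤ i') (hg : GoodB b A i n) :
    GoodB b A i' n :=
  ⟨lt_of_lt_of_le hg.1 (Nat.pow_le_pow_right hb h), hg.2⟩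

lemma good_high_digit {b A i n : ℕ} (hb : 2 ≤ b) (hn : n < b ^ (i+1)) (hg : Good b A n) :
    n / b ^ i ≤ A := by
  have h := hg i
  have : n / b ^ i < b := by
    rw [Nat.div_lt_iff_lt_mul (Nat.pow_pos (n := i) (by omega))]
    calc n < b ^ (i+1) := hn
      _ = b * b ^ i := by rw [pow_succ]; ring
  rwa [Nat.mod_eq_of_lt this] at h

lemma good_low_part {b A i n : ℕ} (hb : 2 ≤ b) (hg : Good b A n) :
    Good b A (n % b ^ i) := by
  intro k
  rcases Nat.lt_or_ge k i with hk | hk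
  · obtain ⟨m, rfl⟩ : ∃ m, i = k + (m + 1) := ⟨i - k - 1, by omega⟩
    have hsplit : b ^ (k + (m+1)) = b ^ k * b ^ (m+1) := by rw [pow_add]
    rw [hsplit, Nat.mod_mul_right_div_self]
    have hdvd : (b : ℕ) ∣ b ^ (m + 1) := dvd_pow_self b (Nat.succ_ne_zero m)
    rw [Nat.mod_mod_of_dvd _ hdvd]
    exact hg k
  · have : n % b ^ i < b ^ k :=
      lt_of_lt_of_le (Nat.mod_lt _ (Nat.pow_pos (n := i) (by omega)))
        (Nat.pow_le_pow_right (by omega) hk)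
    simp [Nat.div_eq_of_lt this]

lemma goodB_le {b A i n : ℕ} (hb : 2 ≤ b) (hg : GoodB b A i n) : n ≤ A * Sg b i := by
  induction i generalizing n with
  | zero =>
    have h0 : n < 1 := by simpa using hg.1
    simp [Sg_zero]; omega
  | succ i ih =>
    have hd : n / b ^ i ≤ A := good_high_digit hb hg.1 hg.2
    have hm : n % b ^ i ≤ A * Sg b i :=
      ih ⟨Nat.mod_lt _ (Nat.pow_pos (n := i) (by omega)), good_low_part hb hg.2⟩
    have hsplit := Nat.div_add_mod n (b ^ i)
    have hcomm : b ^ i * (n / b ^ i) = n / b ^ i * b ^ i := Nat.mul_comm _ _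
    have h2 : n / b ^ i * b ^ i ≤ A * b ^ i := Nat.mul_le_mul_right _ hd
    rw [Sg_succ]
    have h3 : A * (Sg b i + b ^ i) = A * Sg b i + A * b ^ i := by ring
    omega

lemma goodB_compl {b A i n : ℕ} (hb : 2 ≤ b) (hA : A + 2 ≤ b) (hg : GoodB b A i n) :
    GoodB b A i (A * Sg b i - n) := by
  induction i generalizing n with
  | zero =>
    have := hg.1
    have hn : n = 0 := by simpa using this
    subst hn; simpa [Sg_zero] using ⟨by simp, good_zero b A⟩
  | succ i ih =>
    have hd : n / b ^ i ≤ A := good_high_digit hb hg.1 hg.2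
    have hmB : GoodB b A i (n % b ^ i) :=
      ⟨Nat.mod_lt _ (Nat.pow_pos (n := i) (by omega)), good_low_part hb hg.2⟩
    have hm : n % b ^ i ≤ A * Sg b i := goodB_le hb hmB
    have hcompl := ih hmB
    have hdc : A - n / b ^ i ≤ A := Nat.sub_le _ _
    have hres := good_step (i := i) hb hA hdc (lt_of_le_of_lt (Nat.sub_le _ _) (rep_lt_pow hA)) hcompl.2
    have heq : (A - n / b ^ i) * b ^ i + (A * Sg b i - n % b ^ i)
        = A * Sg b (i+1) - n := by
      have hsplit := Nat.div_add_mod n (b ^ i)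
      have hcomm : b ^ i * (n / b ^ i) = n / b ^ i * b ^ i := Nat.mul_comm _ _
      have h1 : (A - n / b ^ i) * b ^ i = A * b ^ i - n / b ^ i * b ^ i :=
        Nat.sub_mul _ _ _
      have h2 : n / b ^ i * b ^ i ≤ A * b ^ i := Nat.mul_le_mul_right _ hd
      rw [Sg_succ]
      have h3 : A * (Sg b i + b ^ i) = A * Sg b i + A * b ^ i := by ring
      omega
    rw [← heq]
    exact hres

lemma goodB_rep {b A i : ℕ} (hb : 2 ≤ b) (hA : A + 2 ≤ b) : GoodB b A i (A * Sg b i) := by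
  have h := goodB_compl hb hA (n := 0) ⟨Nat.pow_pos (n := i) (by omega), good_zero b A⟩
  simpa using h

lemma goodB_single {b A n : ℕ} (hb : 2 ≤ b) (hA : A + 2 ≤ b) (hn : n ≤ A) :
    GoodB b A 1 n := by
  have h := good_step (b := b) (A := A) (d := n) (x := 0) (i := 0) hb hA hn (by simp) (good_zero b A)
  simpa using h

lemma digits_le_of_good {b A : ℕ} (hb : 2 ≤ b) :
    ∀ n, Good b A n → ∀ d ∈ Nat.digits b n, d ≤ A := by
  intro n
  induction n using Nat.strong_induction_on with
  | _ n ih =>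
    intro hg d hd
    rcases Nat.eq_zero_or_pos n with rfl | hn
    · simp at hd
    · rw [Nat.digits_def' (by omega : 1 < b) hn] at hd
      rcases List.mem_cons.1 hd with rfl | hd'
      · have := hg 0; simpa using this
      · refine ih (n / b) (Nat.div_lt_self hn (by omega)) (fun k => ?_) d hd'
        rw [Nat.div_div_eq_div_mul, ← pow_succ']
        exact hg (k + 1)


/-- a common point of the two translated digit-Cantor sets -/
def Sol (p A q B i j s t : ℕ) : Prop :=
  ∃ x y, GoodB p A i x ∧ GoodB q B j y ∧ s + x = t + y

/-- the invariant: the two intervals are linked, or one contains the other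
with a thickness guard -/
def St (p A u q B w i j s t : ℕ) : Prop :=
  (s ≤ t ∧ t ≤ s + A * Sg p i ∧ s + A * Sg p i ≤ t + B * Sg q j) ∨
  (t ≤ s ∧ s ≤ t + B * Sg q j ∧ t + B * Sg q j ≤ s + A * Sg p i) ∨
  (1 ≤ j ∧ t ≤ s ∧ s + A * Sg p i ≤ t + B * Sg q j ∧ w * Sg q (j-1) ≤ A * Sg p i) ∨
  (1 ≤ i ∧ s ≤ t ∧ t + B * Sg q j ≤ s + A * Sg p i ∧ u * Sg p (i-1) ≤ B * Sg q j)

lemma st_swap {p A u q B w i j s t : ℕ} (h : St p A u q B w i j s t) :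
    St q B w p A u j i t s := by
  unfold St at *; tauto

lemma sol_swap {p A q B i j s t : ℕ} (h : Sol p A q B i j s t) :
    Sol q B p A j i t s := by
  obtain ⟨x, y, hx, hy, he⟩ := h
  exact ⟨y, x, hy, hx, he.symm⟩

lemma sol_reflect {p A q B i j s t : ℕ} (hp : 2 ≤ p) (hq : 2 ≤ q)
    (hAp : A + 2 ≤ p) (hBq : B + 2 ≤ q)
    (h : Sol p A q B i j (t + B * Sg q j) (s + A * Sg p i)) : Sol p A q B i j s t := by
  obtain ⟨x, y, hx, hy, he⟩ := h
  refine ⟨A * Sg p i - x, B * Sg q j - y, goodB_compl hp hAp hx, goodB_compl hq hBq hy, ?_⟩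
  have h1 := goodB_le hp hx
  have h2 := goodB_le hq hy
  omega

lemma sol_shiftU {p A q B i j s t d : ℕ} (hp : 2 ≤ p) (hAp : A + 2 ≤ p) (hd : d ≤ A)
    (h : Sol p A q B i j (s + d * p ^ i) t) : Sol p A q B (i+1) j s t := by
  obtain ⟨x, y, hx, hy, he⟩ := h
  exact ⟨d * p ^ i + x, y, good_step hp hAp hd hx.1 hx.2, hy, by omega⟩

lemma pair {A u B w X Y : ℕ} (huw : u * w ≤ A * B) (h : ¬ w * Y ≤ A * X) :
    u * X ≤ B * Y := by
  by_contra h2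
  push_neg at h h2
  have k1 : (u * X) * (w * Y) ≤ (A * X) * (B * Y) := by
    calc (u * X) * (w * Y) = (u * w) * (X * Y) := by ring
      _ ≤ (A * B) * (X * Y) := Nat.mul_le_mul_right _ huw
      _ = (A * X) * (B * Y) := by ring
  have k2 : (A * X + 1) * (B * Y + 1) ≤ w * Y * (u * X) :=
    Nat.mul_le_mul (by omega) (by omega)
  have k3 : (A * X + 1) * (B * Y + 1) = A * X * (B * Y) + A * X + B * Y + 1 := by ring
  have k4 : w * Y * (u * X) = u * X * (w * Y) := by ring
  omega

section Steps

variable {p A u q B w : ℕ}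

lemma stepL1 (hp : p = A + u + 1) (hq : q = B + w + 1) (hA : 1 ≤ A) (hu : 1 ≤ u)
    (hB : 1 ≤ B) (hw : 1 ≤ w)
    (i j s t : ℕ)
    (oracle : ∀ i' j' s' t', i' + j' ≤ i + j + 1 → St p A u q B w i' j' s' t' →
      Sol p A q B i' j' s' t')
    (h1 : s ≤ t) (h2 : t ≤ s + A * Sg p (i+1)) (h3 : s + A * Sg p (i+1) ≤ t + B * Sg q (j+1))
    (hHU : w * Sg q j ≤ A * Sg p i) :
    Sol p A q B (i+1) (j+1) s t := by
  have hp2 : 2 ≤ p := by omega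
  have hAp : A + 2 ≤ p := by omega
  have hPpos : 0 < p ^ i := Nat.pow_pos (by omega)
  have hSg : Sg p (i+1) = Sg p i + p ^ i := Sg_succ p i
  have hri : A * Sg p (i+1) = A * Sg p i + A * p ^ i := by rw [hSg]; ring
  set d := min A ((t - s) / p ^ i) with hd
  have hdA : d ≤ A := min_le_left _ _
  have hdP : d * p ^ i ≤ t - s := by
    calc d * p ^ i ≤ (t - s) / p ^ i * p ^ i :=
          Nat.mul_le_mul_right _ (min_le_right _ _)
      _ ≤ t - s := Nat.div_mul_le_self _ _
  have hdPA : d * p ^ i ≤ A * p ^ i := Nat.mul_le_mul_right _ hdA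
  by_cases hc : t ≤ s + d * p ^ i + A * Sg p i
  · -- linked child L1(i, j+1)
    have hsol := oracle i (j+1) (s + d * p ^ i) t (by omega)
      (Or.inl ⟨by omega, by omega, by omega⟩)
    exact sol_shiftU hp2 hAp hdA hsol
  · -- t lies in the gap above child d : pass to CU(i, j+1) anchored at next child
    have hdlt : (t - s) / p ^ i < A := by
      by_contra hge
      push_neg at hge
      have hdeq : d = A := by rw [hd]; exact Nat.min_eq_left hge
      rw [hdeq] at hc
      omega
    have hdeq : d = (t - s) / p ^ i := by rw [hd]; exact Nat.min_eq_right hdlt.le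
    have hgap : t - s < d * p ^ i + p ^ i := by
      have hmod := Nat.div_add_mod (t - s) (p ^ i)
      have hm := Nat.mod_lt (t - s) hPpos
      have hcomm : p ^ i * ((t - s) / p ^ i) = (t - s) / p ^ i * p ^ i := Nat.mul_comm _ _
      rw [hdeq]; omega
    have hd1A : d + 1 ≤ A := by omega
    have hd1PA : (d + 1) * p ^ i ≤ A * p ^ i := Nat.mul_le_mul_right _ hd1A
    have hd1P : (d + 1) * p ^ i = d * p ^ i + p ^ i := by ring
    have hsol := oracle i (j+1) (s + (d + 1) * p ^ i) t (by omega)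
      (Or.inr (Or.inr (Or.inl ⟨by omega, by omega, by omega, by simpa using hHU⟩)))
    exact sol_shiftU hp2 hAp hd1A hsol

lemma stepCV (hp : p = A + u + 1) (hq : q = B + w + 1) (hA : 1 ≤ A) (hu : 1 ≤ u)
    (hB : 1 ≤ B) (hw : 1 ≤ w) (huw : u * w ≤ A * B)
    (i j s t : ℕ)
    (oracle : ∀ i' j' s' t', i' + j' ≤ i + j + 1 → St p A u q B w i' j' s' t' →
      Sol p A q B i' j' s' t')
    (h1 : s ≤ t) (h2 : t + B * Sg q (j+1) ≤ s + A * Sg p (i+1))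
    (hg : u * Sg p i ≤ B * Sg q (j+1)) :
    Sol p A q B (i+1) (j+1) s t := by
  have hp2 : 2 ≤ p := by omega
  have hq2 : 2 ≤ q := by omega
  have hAp : A + 2 ≤ p := by omega
  by_cases hHV : u * Sg p i ≤ B * Sg q j
  · -- descend the V side within containment
    have hSgq : Sg q (j+1) = Sg q j + q ^ j := Sg_succ q j
    have hmono : B * Sg q j ≤ B * Sg q (j+1) := Nat.mul_le_mul_left _ (Sg_mono q (by omega))
    have hsol := oracle (i+1) j s t (by omega)
      (Or.inr (Or.inr (Or.inr ⟨by omega, h1, by omega, by simpa using hHV⟩)))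
    obtain ⟨x, y, hx, hy, he⟩ := hsol
    exact ⟨x, y, hx, goodB_mono (by omega) (by omega) hy, he⟩
  · have hHU : w * Sg q j ≤ A * Sg p i := by
      by_contra hHU'
      exact hHV (pair huw hHU')
    have hPpos : 0 < p ^ i := Nat.pow_pos (by omega)
    have hSg : Sg p (i+1) = Sg p i + p ^ i := Sg_succ p i
    have hri : A * Sg p (i+1) = A * Sg p i + A * p ^ i := by rw [hSg]; ring
    set d := min A ((t - s) / p ^ i) with hd
    have hdA : d ≤ A := min_le_left _ _
    have hdP : d * p ^ i ≤ t - s := by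
      calc d * p ^ i ≤ (t - s) / p ^ i * p ^ i :=
            Nat.mul_le_mul_right _ (min_le_right _ _)
        _ ≤ t - s := Nat.div_mul_le_self _ _
    have hdPA : d * p ^ i ≤ A * p ^ i := Nat.mul_le_mul_right _ hdA
    by_cases hc : t ≤ s + d * p ^ i + A * Sg p i
    · by_cases hc2 : t + B * Sg q (j+1) ≤ s + d * p ^ i + A * Sg p i
      · -- containment child CV(i, j+1)
        match i, hg, hc2, hdP with
        | 0, hg, hc2, hdP =>
          exfalso
          have hb1 : 1 ≤ B * Sg q (j+1) :=
            Nat.one_le_iff_ne_zero.2 (by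
              have := Nat.mul_le_mul hB (Sg_pos (b := q) (i := j+1) (by omega))
              omega)
          have h0 : A * Sg p 0 = 0 := by simp [Sg_zero]
          omega
        | i0+1, hg, hc2, hdP =>
          have hgm : u * Sg p i0 ≤ u * Sg p (i0+1) :=
            Nat.mul_le_mul_left _ (Sg_mono p (by omega))
          have hsol := oracle (i0+1) (j+1) (s + d * p ^ (i0+1)) t (by omega)
            (Or.inr (Or.inr (Or.inr ⟨by omega, by omega, by omega, by
              simpa using le_trans hgm hg⟩)))
          exact sol_shiftU hp2 hAp hdA hsol
      · -- linked child L1(i, j+1)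
        have hsol := oracle i (j+1) (s + d * p ^ i) t (by omega)
          (Or.inl ⟨by omega, by omega, by omega⟩)
        exact sol_shiftU hp2 hAp hdA hsol
    · -- gap case
      have hdlt : (t - s) / p ^ i < A := by
        by_contra hge
        push_neg at hge
        have hdeq : d = A := by rw [hd]; exact Nat.min_eq_left hge
        rw [hdeq] at hc
        omega
      have hdeq : d = (t - s) / p ^ i := by rw [hd]; exact Nat.min_eq_right hdlt.le
      have hgap : t - s < d * p ^ i + p ^ i := by
        have hmod := Nat.div_add_mod (t - s) (p ^ i)
        have hm := Nat.mod_lt (t - s) hPpos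
        have hcomm : p ^ i * ((t - s) / p ^ i) = (t - s) / p ^ i * p ^ i := Nat.mul_comm _ _
        rw [hdeq]; omega
      have hd1A : d + 1 ≤ A := by omega
      have hd1PA : (d + 1) * p ^ i ≤ A * p ^ i := Nat.mul_le_mul_right _ hd1A
      have hd1P : (d + 1) * p ^ i = d * p ^ i + p ^ i := by ring
      have hPr : A * Sg p i + u * Sg p i + 1 = p ^ i := by
        have h := Sg_pred_mul (b := p) (c := A + u) (by omega) i
        have hmul : (A + u) * Sg p i = A * Sg p i + u * Sg p i := by ring
        omega
      have hz : s + (d + 1) * p ^ i ≤ t + B * Sg q (j+1) := by omega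
      by_cases hc3 : t + B * Sg q (j+1) ≤ s + (d + 1) * p ^ i + A * Sg p i
      · -- linked child L2(i, j+1)
        have hsol := oracle i (j+1) (s + (d + 1) * p ^ i) t (by omega)
          (Or.inr (Or.inl ⟨by omega, by omega, by omega⟩))
        exact sol_shiftU hp2 hAp hd1A hsol
      · -- containment child CU(i, j+1)
        have hsol := oracle i (j+1) (s + (d + 1) * p ^ i) t (by omega)
          (Or.inr (Or.inr (Or.inl ⟨by omega, by omega, by omega, by simpa using hHU⟩)))
        exact sol_shiftU hp2 hAp hd1A hsol

end Steps

theorem main : ∀ n p A u q B w i j s t : ℕ,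
    p = A + u + 1 → q = B + w + 1 → 1 ≤ A → 1 ≤ u → 1 ≤ B → 1 ≤ w → u * w ≤ A * B →
    i + j ≤ n → St p A u q B w i j s t → Sol p A q B i j s t := by
  intro n
  induction n with
  | zero =>
    intro p A u q B w i j s t hp hq hA hu hB hw huw hn hst
    have hi : i = 0 := by omega
    have hj : j = 0 := by omega
    subst hi; subst hj
    have h0p : A * Sg p 0 = 0 := by simp [Sg_zero]
    have h0q : B * Sg q 0 = 0 := by simp [Sg_zero]
    have hset : s = t := by
      rcases hst with h | h | h | h <;> omega
    exact ⟨0, 0, ⟨by simp, good_zero _ _⟩, ⟨by simp, good_zero _ _⟩, by omega⟩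
  | succ n ih =>
    intro p A u q B w i j s t hp hq hA hu hB hw huw hn hst
    have hp2 : 2 ≤ p := by omega
    have hq2 : 2 ≤ q := by omega
    have hAp : A + 2 ≤ p := by omega
    have hBq : B + 2 ≤ q := by omega
    match i, j, hn, hst with
    | 0, j, hn, hst =>
      have h0p : A * Sg p 0 = 0 := by simp [Sg_zero]
      rcases hst with ⟨a1, a2, a3⟩ | ⟨a1, a2, a3⟩ | ⟨a1, a2, a3, a4⟩ | ⟨a1, a2, a3, a4⟩
      · exact ⟨0, 0, ⟨by simp, good_zero _ _⟩,
          ⟨Nat.pow_pos (by omega), good_zero _ _⟩, by omega⟩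
      · exact ⟨0, B * Sg q j, ⟨by simp, good_zero _ _⟩, goodB_rep hq2 hBq, by omega⟩
      · -- CU at i = 0 : forces j = 1
        have hz : w * Sg q (j-1) = 0 := by omega
        have hSg0 : Sg q (j-1) = 0 := by
          rcases Nat.mul_eq_zero.1 hz with h | h
          · omega
          · exact h
        have hj1 : j = 1 := by
          by_contra hj'
          have : 1 ≤ j - 1 := by omega
          have := Sg_pos (b := q) this
          omega
        subst hj1
        have hSg1 : Sg q 1 = 1 := by simp [Sg]
        have hBq1 : B * Sg q 1 = B := by rw [hSg1, mul_one]
        refine ⟨0, s - t, ⟨by simp, good_zero _ _⟩, goodB_single hq2 hBq (by omega), by omega⟩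
      · exact absurd a1 (by omega)
    | i0+1, 0, hn, hst =>
      have h0q : B * Sg q 0 = 0 := by simp [Sg_zero]
      rcases hst with ⟨a1, a2, a3⟩ | ⟨a1, a2, a3⟩ | ⟨a1, a2, a3, a4⟩ | ⟨a1, a2, a3, a4⟩
      · exact ⟨A * Sg p (i0+1), 0, goodB_rep hp2 hAp, ⟨by simp, good_zero _ _⟩, by omega⟩
      · exact ⟨0, 0, ⟨Nat.pow_pos (by omega), good_zero _ _⟩,
          ⟨by simp, good_zero _ _⟩, by omega⟩
      · exact absurd a1 (by omega)
      · -- CV at j = 0 : forces i = 1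
        have hz : u * Sg p ((i0+1)-1) = 0 := by omega
        have hSg0 : Sg p i0 = 0 := by
          simp only [Nat.add_sub_cancel] at hz
          rcases Nat.mul_eq_zero.1 hz with h | h
          · omega
          · exact h
        have hi0 : i0 = 0 := by
          by_contra hi'
          have := Sg_pos (b := p) (i := i0) (by omega)
          omega
        subst hi0
        have hSg1 : Sg p (0+1) = 1 := by simp [Sg]
        have hAp1 : A * Sg p (0+1) = A := by rw [hSg1, mul_one]
        refine ⟨t - s, 0, goodB_single hp2 hAp (by omega), ⟨by simp, good_zero _ _⟩, by omega⟩
    | i0+1, j0+1, hn, hst =>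
      have horacle : ∀ i' j' s' t', i' + j' ≤ i0 + j0 + 1 →
          St p A u q B w i' j' s' t' → Sol p A q B i' j' s' t' :=
        fun i' j' s' t' hm hst' =>
          ih p A u q B w i' j' s' t' hp hq hA hu hB hw huw (by omega) hst'
      have horacle' : ∀ i' j' s' t', i' + j' ≤ j0 + i0 + 1 →
          St q B w p A u i' j' s' t' → Sol q B p A i' j' s' t' :=
        fun i' j' s' t' hm hst' =>
          sol_swap (horacle j' i' t' s' (by omega) (st_swap hst'))
      rcases hst with hL1 | hL2 | hCU | hCV
      · by_cases hHU : w * Sg q j0 ≤ A * Sg p i0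
        · exact stepL1 hp hq hA hu hB hw i0 j0 s t horacle hL1.1 hL1.2.1 hL1.2.2 hHU
        · have hHV : u * Sg p i0 ≤ B * Sg q j0 := pair huw hHU
          have hsol : Sol q B p A (j0+1) (i0+1)
              (s + A * Sg p (i0+1)) (t + B * Sg q (j0+1)) := by
            refine stepL1 hq hp hB hw hA hu j0 i0 _ _ horacle' ?_ ?_ ?_ hHV
            · exact hL1.2.2
            · omega
            · omega
          exact sol_reflect hp2 hq2 hAp hBq (sol_swap hsol)
      · by_cases hHU : w * Sg q j0 ≤ A * Sg p i0
        · have hsol : Sol p A q B (i0+1) (j0+1)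
              (t + B * Sg q (j0+1)) (s + A * Sg p (i0+1)) := by
            refine stepL1 hp hq hA hu hB hw i0 j0 _ _ horacle ?_ ?_ ?_ hHU
            · exact hL2.2.2
            · omega
            · omega
          exact sol_reflect hp2 hq2 hAp hBq hsol
        · have hHV : u * Sg p i0 ≤ B * Sg q j0 := pair huw hHU
          have hsol : Sol q B p A (j0+1) (i0+1) t s :=
            stepL1 hq hp hB hw hA hu j0 i0 t s horacle' hL2.1 hL2.2.1 hL2.2.2 hHV
          exact sol_swap hsol
      · have hg' : w * Sg q j0 ≤ A * Sg p (i0+1) := by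
          have := hCU.2.2.2
          simpa using this
        have huw' : w * u ≤ B * A := by
          rw [Nat.mul_comm w u, Nat.mul_comm B A]; exact huw
        have hsol : Sol q B p A (j0+1) (i0+1) t s :=
          stepCV hq hp hB hw hA hu huw' j0 i0 t s horacle'
            hCU.2.1 hCU.2.2.1 hg'
        exact sol_swap hsol
      · have hg' : u * Sg p i0 ≤ B * Sg q (j0+1) := by
          have := hCV.2.2.2
          simpa using this
        exact stepCV hp hq hA hu hB hw huw i0 j0 s t horacle hCV.2.1 hCV.2.2.1 hg'


lemma pow_ne_pow {p q : ℕ} (hp : p.Prime) (hq : q.Prime) (hpq : p ≠ q) {k a : ℕ}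
    (hk : 1 ≤ k) : q ^ k ≠ p ^ a := by
  intro h
  rcases Nat.eq_zero_or_pos a with rfl | ha
  · rw [pow_zero] at h
    have := Nat.one_lt_pow (by omega : k ≠ 0) hq.one_lt
    omega
  · have hdvd : p ∣ q ^ k := h ▸ dvd_pow_self p (by omega)
    have := hp.dvd_of_dvd_pow hdvd
    exact hpq ((Nat.prime_dvd_prime_iff_eq hp hq).1 this)

set_option maxHeartbeats 2000000 in
lemma entry {p q : ℕ} (hp : p.Prime) (hq : q.Prime) (hpq : p ≠ q) (M : ℕ) :
    ∃ i l : ℕ, M ≤ i ∧ 1 ≤ l ∧ p ^ i ≤ q ^ l ∧ q ^ l * p ≤ p ^ i * (p + 1) := by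
  have hp2 := hp.two_le
  have hq2 := hq.two_le
  have hp1R : (1:ℝ) < (p:ℝ) := by exact_mod_cast hp.one_lt
  have hq1R : (1:ℝ) < (q:ℝ) := by exact_mod_cast hq.one_lt
  set LP := Real.log p with hLP
  set LQ := Real.log q with hLQ
  have hLPpos : 0 < LP := Real.log_pos hp1R
  have hLQpos : 0 < LQ := Real.log_pos hq1R
  set δ := Real.log ((p:ℝ)+1) - LP with hδ
  have hδpos : 0 < δ := by
    have h1 : LP < Real.log ((p:ℝ)+1) := Real.log_lt_log (by positivity) (by linarith)
    simp only [hδ]; linarith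
  suffices h : ∃ i l : ℕ, M ≤ i ∧ 1 ≤ l ∧
      (i:ℝ) * LP ≤ (l:ℝ) * LQ ∧ (l:ℝ) * LQ ≤ (i:ℝ) * LP + δ by
    obtain ⟨i, l, hMi, hl1, hmain1, hmain2⟩ := h
    refine ⟨i, l, hMi, hl1, ?_, ?_⟩
    · have h1 : Real.log ((p:ℝ) ^ i) ≤ Real.log ((q:ℝ) ^ l) := by
        rw [Real.log_pow, Real.log_pow]; exact hmain1
      have h2 : ((p:ℝ)) ^ i ≤ ((q:ℝ)) ^ l :=
        (Real.log_le_log_iff (by positivity) (by positivity)).1 h1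
      exact_mod_cast h2
    · have h1 : Real.log ((q:ℝ) ^ l * p) ≤ Real.log ((p:ℝ) ^ i * ((p:ℝ)+1)) := by
        rw [Real.log_mul (by positivity) (by positivity),
          Real.log_mul (by positivity) (by positivity), Real.log_pow, Real.log_pow]
        have hlog : Real.log ((p:ℝ)+1) = δ + LP := by simp only [hδ]; ring
        rw [hlog]
        have : Real.log (p:ℝ) = LP := rfl
        rw [this]
        linarith
      have h2 : ((q:ℝ)) ^ l * p ≤ ((p:ℝ)) ^ i * ((p:ℝ)+1) :=
        (Real.log_le_log_iff (by positivity) (by positivity)).1 h1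
      exact_mod_cast h2
  -- find the pair via Dirichlet approximation
  obtain ⟨n0, hn0⟩ := exists_nat_ge (LP / δ)
  set n := n0 + 3 with hn
  have hnpos : 0 < n := by omega
  have hn1R : (4:ℝ) ≤ (n:ℝ) + 1 := by
    have : (3:ℝ) ≤ (n:ℝ) := by exact_mod_cast (by omega : 3 ≤ n)
    linarith
  have hnR : LP / ((n:ℝ)+1) ≤ δ := by
    rw [div_le_iff₀ (by linarith)]
    have h1 : LP ≤ δ * n0 := by
      rw [div_le_iff₀ hδpos] at hn0; linarith
    have h2 : (n0:ℝ) ≤ (n:ℝ) + 1 := by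
      have : (n0:ℝ) ≤ (n:ℝ) := by exact_mod_cast (by omega : n0 ≤ n)
      linarith
    nlinarith
  have hnR3 : LP / ((n:ℝ)+1) ≤ LP / 3 :=
    div_le_div_of_nonneg_left hLPpos.le (by norm_num) (by linarith)
  set θ := LQ / LP with hθ
  have hθpos : 0 < θ := div_pos hLQpos hLPpos
  obtain ⟨k, hk0, hkn, happrox⟩ := Real.exists_nat_abs_mul_sub_round_le θ hnpos
  obtain ⟨a, ha⟩ : ∃ a : ℤ, a = round ((k:ℝ) * θ) := ⟨_, rfl⟩
  rw [← ha] at happrox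
  have hkR : (1:ℝ) ≤ (k:ℝ) := by exact_mod_cast hk0
  have hkθpos : 0 < (k:ℝ) * θ := mul_pos (by linarith) hθpos
  obtain ⟨β, hβ⟩ : ∃ β : ℝ, β = (k:ℝ) * LQ - (a:ℝ) * LP := ⟨_, rfl⟩
  have hβeq : β = ((k:ℝ)*θ - a) * LP := by
    simp only [hβ, hθ]; field_simp
  have hβabs : |β| ≤ LP / ((n:ℝ)+1) := by
    rw [hβeq, abs_mul, abs_of_pos hLPpos]
    calc |(k:ℝ)*θ - a| * LP ≤ (1/((n:ℝ)+1)) * LP :=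
          mul_le_mul_of_nonneg_right happrox hLPpos.le
      _ = LP / ((n:ℝ)+1) := by ring
  have hfrac1 : (1:ℝ)/((n:ℝ)+1) < 1 := by
    rw [div_lt_one (by linarith)]; linarith
  have hapos : (0:ℤ) ≤ a := by
    have h1 := abs_le.1 happrox
    have h2 : ((-1:ℤ):ℝ) < (a:ℝ) := by push_cast; linarith [h1.1, h1.2]
    have h3 : (-1:ℤ) < a := by exact_mod_cast h2
    omega
  obtain ⟨A', hA'⟩ : ∃ A' : ℕ, (A' : ℤ) = a := ⟨a.toNat, Int.toNat_of_nonneg hapos⟩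
  have hAcast : ((A':ℕ):ℝ) = (a:ℝ) := by exact_mod_cast hA'
  have hβne : β ≠ 0 := by
    intro h0
    have h1 : (k:ℝ) * LQ = ((A':ℕ):ℝ) * LP := by rw [hAcast]; simp only [hβ] at h0; linarith
    have h2 : Real.log ((q:ℝ)^k) = Real.log ((p:ℝ)^A') := by
      rw [Real.log_pow, Real.log_pow]; exact h1
    have h3 : ((q:ℝ))^k = ((p:ℝ))^A' := by
      have hq0 : (0:ℝ) < (q:ℝ)^k := by positivity
      have hp0 : (0:ℝ) < (p:ℝ)^A' := by positivity
      calc ((q:ℝ))^k = Real.exp (Real.log ((q:ℝ)^k)) := (Real.exp_log hq0).symm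
        _ = Real.exp (Real.log ((p:ℝ)^A')) := by rw [h2]
        _ = ((p:ℝ))^A' := Real.exp_log hp0
    have h4 : q^k = p^A' := by exact_mod_cast h3
    exact pow_ne_pow hp hq hpq hk0 h4
  clear happrox ha hapos hfrac1 hθpos hkn
  set m := M + 1 with hm
  have hmR : (1:ℝ) ≤ (m:ℝ) := by exact_mod_cast (by omega : 1 ≤ m)
  have hmLP : 0 < (m:ℝ) * LP := by nlinarith
  rcases lt_or_gt_of_ne hβne with hneg | hposβ
  · -- β < 0
    obtain ⟨γ, hγ⟩ : ∃ γ : ℝ, γ = -β := ⟨_, rfl⟩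
    have hγpos : 0 < γ := by simp only [hγ]; linarith
    have hγle : γ ≤ LP/((n:ℝ)+1) := by
      have : |β| = γ := by rw [hγ, abs_of_neg hneg]
      linarith [hβabs, this.symm.le]
    have hγle3 : γ ≤ LP/3 := le_trans hγle hnR3
    have hA1 : 1 ≤ A' := by
      by_contra h
      have hA0 : A' = 0 := by omega
      have ha0 : (a:ℝ) = 0 := by rw [← hAcast, hA0]; norm_num
      have hβval : β = (k:ℝ) * LQ := by simp only [hβ, ha0]; ring
      have : 0 < β := by rw [hβval]; positivity
      linarith
    obtain ⟨K, hK⟩ : ∃ K : ℕ, K = ⌊ (m:ℝ) * LP / γ ⌋₊ := ⟨_, rfl⟩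
    have hKle : (K:ℝ) * γ ≤ (m:ℝ) * LP := by
      have h1 : (K:ℝ) ≤ (m:ℝ)*LP/γ := by
        rw [hK]; exact Nat.floor_le (by positivity)
      calc (K:ℝ)*γ ≤ ((m:ℝ)*LP/γ)*γ := mul_le_mul_of_nonneg_right h1 hγpos.le
        _ = (m:ℝ)*LP := by field_simp
    have hKgt : (m:ℝ) * LP < ((K:ℝ)+1) * γ := by
      have h1 : (m:ℝ)*LP/γ < (K:ℝ) + 1 := by
        rw [hK]; exact Nat.lt_floor_add_one _
      calc (m:ℝ)*LP = ((m:ℝ)*LP/γ)*γ := by field_simp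
        _ < ((K:ℝ)+1)*γ := mul_lt_mul_of_pos_right h1 hγpos
    have hK2m : 2 * m ≤ K := by
      rw [hK]
      apply Nat.le_floor
      rw [le_div_iff₀ hγpos]
      push_cast
      nlinarith [hγle3, hmR, hγpos, hLPpos]
    refine ⟨K * A' - m, K * k, ?_, ?_, ?_, ?_⟩
    · -- M ≤ i
      have : m ≤ K * A' - m := by
        have h1 : 2*m ≤ K * A' := le_trans hK2m (Nat.le_mul_of_pos_right K (by omega))
        omega
      omega
    · have h1 : 1 ≤ K := by omega
      exact Nat.one_le_iff_ne_zero.2 (Nat.mul_ne_zero (by omega) (by omega))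
    · -- real bounds
      have hiKA : (K * A' - m) + m = K * A' := by
        have h1 : 2*m ≤ K * A' := le_trans hK2m (Nat.le_mul_of_pos_right K (by omega))
        omega
      have hir : ((K * A' - m : ℕ):ℝ) = (K:ℝ)*((A':ℕ):ℝ) - (m:ℝ) := by
        have h2 : (((K * A' - m) + m : ℕ):ℝ) = ((K * A' : ℕ):ℝ) := by rw [hiKA]
        push_cast at h2 ⊢
        linarith
      have hlr : ((K * k : ℕ):ℝ) = (K:ℝ)*(k:ℝ) := by push_cast; ring
      rw [hir, hlr]
      have hlin : (K:ℝ)*(k:ℝ) * LQ - ((K:ℝ)*((A':ℕ):ℝ) - (m:ℝ)) * LP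
          = (m:ℝ)*LP - (K:ℝ)*γ := by
        simp only [hγ, hβ, hAcast]; ring
      nlinarith [hKle]
    · have hiKA : (K * A' - m) + m = K * A' := by
        have h1 : 2*m ≤ K * A' := le_trans hK2m (Nat.le_mul_of_pos_right K (by omega))
        omega
      have hir : ((K * A' - m : ℕ):ℝ) = (K:ℝ)*((A':ℕ):ℝ) - (m:ℝ) := by
        have h2 : (((K * A' - m) + m : ℕ):ℝ) = ((K * A' : ℕ):ℝ) := by rw [hiKA]
        push_cast at h2 ⊢
        linarith
      have hlr : ((K * k : ℕ):ℝ) = (K:ℝ)*(k:ℝ) := by push_cast; ring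
      rw [hir, hlr]
      have hlin : (K:ℝ)*(k:ℝ) * LQ - ((K:ℝ)*((A':ℕ):ℝ) - (m:ℝ)) * LP
          = (m:ℝ)*LP - (K:ℝ)*γ := by
        simp only [hγ, hβ, hAcast]; ring
      have hγδ : γ ≤ δ := le_trans hγle hnR
      nlinarith [hKgt]
  · -- β > 0
    have hβle : β ≤ LP/((n:ℝ)+1) := by
      have : |β| = β := abs_of_pos hposβ
      linarith [hβabs]
    have hβδ : β ≤ δ := le_trans hβle hnR
    obtain ⟨K, hK⟩ : ∃ K : ℕ, K = ⌈ (m:ℝ) * LP / β ⌉₊ := ⟨_, rfl⟩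
    have hK1 : 1 ≤ K := by
      have h0 : 0 < K := by rw [hK]; exact Nat.ceil_pos.2 (by positivity)
      omega
    have hKge : (m:ℝ) * LP ≤ (K:ℝ) * β := by
      have h1 : (m:ℝ)*LP/β ≤ (K:ℝ) := by rw [hK]; exact Nat.le_ceil _
      calc (m:ℝ)*LP = ((m:ℝ)*LP/β)*β := by field_simp
        _ ≤ (K:ℝ)*β := mul_le_mul_of_nonneg_right h1 hposβ.le
    have hKlt : (K:ℝ)*β < (m:ℝ)*LP + β := by
      have h1 : (K:ℝ) < (m:ℝ)*LP/β + 1 := by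
        rw [hK]; exact Nat.ceil_lt_add_one (by positivity)
      have h2 : (K:ℝ)*β < ((m:ℝ)*LP/β + 1)*β := mul_lt_mul_of_pos_right h1 hposβ
      calc (K:ℝ)*β < ((m:ℝ)*LP/β + 1)*β := h2
        _ = (m:ℝ)*LP + β := by field_simp
    refine ⟨K * A' + m, K * k, by omega, ?_, ?_, ?_⟩
    · exact Nat.one_le_iff_ne_zero.2 (Nat.mul_ne_zero (by omega) (by omega))
    · have hir : ((K * A' + m : ℕ):ℝ) = (K:ℝ)*((A':ℕ):ℝ) + (m:ℝ) := by push_cast; ring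
      have hlr : ((K * k : ℕ):ℝ) = (K:ℝ)*(k:ℝ) := by push_cast; ring
      rw [hir, hlr]
      have hlin : (K:ℝ)*(k:ℝ) * LQ - ((K:ℝ)*((A':ℕ):ℝ) + (m:ℝ)) * LP
          = (K:ℝ)*β - (m:ℝ)*LP := by
        simp only [hβ, hAcast]; ring
      nlinarith [hKge]
    · have hir : ((K * A' + m : ℕ):ℝ) = (K:ℝ)*((A':ℕ):ℝ) + (m:ℝ) := by push_cast; ring
      have hlr : ((K * k : ℕ):ℝ) = (K:ℝ)*(k:ℝ) := by push_cast; ring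
      rw [hir, hlr]
      have hlin : (K:ℝ)*(k:ℝ) * LQ - ((K:ℝ)*((A':ℕ):ℝ) + (m:ℝ)) * LP
          = (K:ℝ)*β - (m:ℝ)*LP := by
        simp only [hβ, hAcast]; ring
      nlinarith [hKlt]

lemma good_pow {q B m : ℕ} (hq : 2 ≤ q) (hB : 1 ≤ B) : Good q B (q ^ m) := by
  intro k
  rcases lt_trichotomy k m with h | rfl | h
  · have he : q ^ m = q ^ (m - k - 1) * q * q ^ k := by
      rw [mul_assoc, ← pow_succ', ← pow_add]
      congr 1
      omega
    rw [he, Nat.mul_div_cancel _ (Nat.pow_pos (by omega)), Nat.mul_mod_left]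
    omega
  · rw [Nat.div_self (Nat.pow_pos (by omega))]
    have : 1 % q = 1 := Nat.mod_eq_of_lt (by omega)
    omega
  · have hlt : q ^ m < q ^ k := Nat.pow_lt_pow_right (by omega) h
    rw [Nat.div_eq_of_lt hlt]
    simp

lemma exists_good_gt {p q A B u w : ℕ} (hp : p.Prime) (hq : q.Prime) (hpq : p ≠ q)
    (hpA : p = A + u + 1) (hqB : q = B + w + 1) (hA : 1 ≤ A) (hu : 1 ≤ u)
    (hB : 1 ≤ B) (hw : 1 ≤ w) (huw : u * w ≤ A * B)
    (hab : A * (q - 1) ≤ B * (p - 1)) (n : ℕ) :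
    ∃ N, n < N ∧ Good p A N ∧ Good q B N := by
  have hp2 : 2 ≤ p := hp.two_le
  have hq2 : 2 ≤ q := hq.two_le
  have hAp : A + 2 ≤ p := by omega
  have hBq : B + 2 ≤ q := by omega
  obtain ⟨i, l, hiM, hl1, hlow, hhigh⟩ := entry hp hq hpq (n + 1)
  have hi1 : 1 ≤ i := by omega
  -- q^l ≤ p^i + p^(i-1)
  have hps : p ^ (i - 1) * p = p ^ i := by
    rw [← pow_succ]
    congr 1
    omega
  have h7 : q ^ l ≤ p ^ i + p ^ (i - 1) := by
    have hmul : (p ^ i + p ^ (i - 1)) * p = p ^ i * (p + 1) := by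
      rw [Nat.add_mul, hps]; ring
    have := hhigh
    rw [← hmul] at this
    exact Nat.le_of_mul_le_mul_right this (by omega)
  have hr1 : p ^ (i - 1) ≤ A * Sg p i := by
    calc p ^ (i-1) ≤ Sg p i := pow_le_Sg hi1
      _ ≤ A * Sg p i := Nat.le_mul_of_pos_left _ (by omega)
  have hX : (p - 1) * Sg p i + 1 = p ^ i := Sg_pred_mul (by omega) i
  have hY : (q - 1) * Sg q l + 1 = q ^ l := Sg_pred_mul (by omega) l
  have hXY : (p - 1) * Sg p i ≤ (q - 1) * Sg q l := by omega
  have hrho : A * Sg p i ≤ B * Sg q l := by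
    have hpos : 0 < (p - 1) * (q - 1) := Nat.mul_pos (by omega) (by omega)
    refine Nat.le_of_mul_le_mul_left ?_ hpos
    calc (p-1) * (q-1) * (A * Sg p i) = (A * (q-1)) * ((p-1) * Sg p i) := by ring
      _ ≤ (B * (p-1)) * ((q-1) * Sg q l) := Nat.mul_le_mul hab hXY
      _ = (p-1) * (q-1) * (B * Sg q l) := by ring
  have hst : St p A u q B w i l (p ^ i) (q ^ l) :=
    Or.inl ⟨hlow, by omega, by omega⟩
  obtain ⟨x, y, hx, hy, he⟩ :=
    main (i + l) p A u q B w i l (p ^ i) (q ^ l) hpA hqB hA hu hB hw huw le_rfl hst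
  have hgles := Nat.lt_pow_self (n := i) (by omega : 1 < p)
  refine ⟨p ^ i + x, by omega, ?_, ?_⟩
  · have hres := good_step (b := p) (A := A) (d := 1) hp2 hAp (by omega) hx.1 hx.2
    rw [one_mul] at hres
    exact hres.2
  · have hres := good_step (b := q) (A := B) (d := 1) hq2 hBq (by omega) hy.1 hy.2
    rw [one_mul] at hres
    rw [he]
    exact hres.2

end EGRS

/-- Erdős–Graham–Ruzsa–Straus: for two distinct odd primes `p, q` and positive
integers `A, B` with `A/(p-1) + B/(q-1) ≥ 1`, there are infinitely many
positive integers `N` that are both `(p,A)`-good and `(q,B)`-good. -/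
theorem infinitely_many_good_two_primes
    (p q A B : ℕ) (hp : p.Prime) (hq : q.Prime)
    (hp2 : 2 < p) (hq2 : 2 < q) (hpq : p ≠ q)
    (hA : 0 < A) (hB : 0 < B)
    (hineq : (A : ℝ) / ((p : ℝ) - 1) + (B : ℝ) / ((q : ℝ) - 1) ≥ 1) :
    {N : ℕ | 0 < N ∧ (∀ d ∈ Nat.digits p N, d ≤ A) ∧
      (∀ d ∈ Nat.digits q N, d ≤ B)}.Infinite := by
  apply Set.infinite_of_forall_exists_gt
  intro n
  by_cases hA' : p - 1 ≤ A
  · refine ⟨q ^ (n + 1), ⟨Nat.pow_pos (by omega), ?_, ?_⟩, ?_⟩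
    · intro d hd
      have := Nat.digits_lt_base (by omega) hd
      omega
    · exact EGRS.digits_le_of_good (by omega) _ (EGRS.good_pow (by omega) hB)
    · have := Nat.lt_pow_self (n := n) (by omega : 1 < q)
      have h2 : q ^ n ≤ q ^ (n+1) := Nat.pow_le_pow_right (by omega) (by omega)
      omega
  by_cases hB' : q - 1 ≤ B
  · refine ⟨p ^ (n + 1), ⟨Nat.pow_pos (by omega), ?_, ?_⟩, ?_⟩
    · exact EGRS.digits_le_of_good (by omega) _ (EGRS.good_pow (by omega) hA)
    · intro d hd
      have := Nat.digits_lt_base (by omega) hd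
      omega
    · have := Nat.lt_pow_self (n := n) (by omega : 1 < p)
      have h2 : p ^ n ≤ p ^ (n+1) := Nat.pow_le_pow_right (by omega) (by omega)
      omega
  -- main case
  push_neg at hA' hB'
  have hAp : A + 2 ≤ p := by omega
  have hBq : B + 2 ≤ q := by omega
  -- derive the natural-number inequality from the real hypothesis
  have hp1R : (1:ℝ) < (p:ℝ) := by exact_mod_cast hp.one_lt
  have hq1R : (1:ℝ) < (q:ℝ) := by exact_mod_cast hq.one_lt
  have hkey : (p - 1) * (q - 1) ≤ A * (q - 1) + B * (p - 1) := by
    have hpp : (0:ℝ) < (p:ℝ) - 1 := by linarith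
    have hqp : (0:ℝ) < (q:ℝ) - 1 := by linarith
    have hR : ((p:ℝ) - 1) * ((q:ℝ) - 1) ≤ (A:ℝ) * ((q:ℝ)-1) + (B:ℝ) * ((p:ℝ)-1) := by
      rw [ge_iff_le, div_add_div _ _ (ne_of_gt hpp) (ne_of_gt hqp),
        le_div_iff₀ (by positivity)] at hineq
      nlinarith [hineq]
    have e1 : ((p:ℝ) - 1) = ((p - 1 : ℕ) : ℝ) := by
      have : (1:ℕ) ≤ p := by omega
      push_cast [Nat.cast_sub this]
      ring
    have e2 : ((q:ℝ) - 1) = ((q - 1 : ℕ) : ℝ) := by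
      have : (1:ℕ) ≤ q := by omega
      push_cast [Nat.cast_sub this]
      ring
    rw [e1, e2] at hR
    exact_mod_cast hR
  set u := p - 1 - A with hu
  set w := q - 1 - B with hw
  have hu1 : 1 ≤ u := by omega
  have hw1 : 1 ≤ w := by omega
  have hpA : p = A + u + 1 := by omega
  have hqB : q = B + w + 1 := by omega
  have huw : u * w ≤ A * B := by
    have e1 : p - 1 = A + u := by omega
    have e2 : q - 1 = B + w := by omega
    rw [e1, e2] at hkey
    nlinarith [hkey]
  rcases le_total (A * (q - 1)) (B * (p - 1)) with hab | hab
  · obtain ⟨N, hN, hgp, hgq⟩ :=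
      EGRS.exists_good_gt hp hq hpq hpA hqB hA hu1 hB hw1 huw hab n
    exact ⟨N, ⟨by omega, EGRS.digits_le_of_good (by omega) N hgp,
      EGRS.digits_le_of_good (by omega) N hgq⟩, hN⟩
  · have huw' : w * u ≤ B * A := by
      rw [Nat.mul_comm w u, Nat.mul_comm B A]; exact huw
    obtain ⟨N, hN, hgq, hgp⟩ :=
      EGRS.exists_good_gt hq hp (Ne.symm hpq) hqB hpA hB hw1 hA hu1 huw' hab n
    exact ⟨N, ⟨by omega, EGRS.digits_le_of_good (by omega) N hgp,
      EGRS.digits_le_of_good (by omega) N hgq⟩, hN⟩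
end

section
/- Let p and q be two fixed, distinct odd primes. Then there are infinitely many positive integers N such that gcd(C(2N,N), p·q) = 1, i.e., neither p nor q divides the central binomial coefficient C(2N,N). -/
namespace EGRSAux

/-- All base-`b` digits of `n` are at most `(b-1)/2`. -/
def Good (b n : ℕ) : Prop := ∀ i, n / b ^ i % b ≤ (b - 1) / 2

lemma good_zero (b : ℕ) : Good b 0 := by
  intro i; simp

lemma good_small {b n : ℕ} (hb : 0 < b) (h : n ≤ (b - 1) / 2) : Good b n := by
  intro i
  cases i with
  | zero =>
      simp only [pow_zero, Nat.div_one]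
      have h2 := Nat.mod_le n b
      omega
  | succ j =>
      have hb1 : n < b := by omega
      have hbj : n < b ^ (j + 1) := by
        calc n < b := hb1
        _ ≤ b ^ (j+1) := Nat.le_self_pow (by omega) b
      simp [Nat.div_eq_of_lt hbj]

lemma good_div {b n : ℕ} (h : Good b n) : Good b (n / b) := by
  intro i
  have hh : n / b / b ^ i = n / b ^ (i + 1) := by
    rw [Nat.div_div_eq_div_mul, pow_succ, mul_comm]
  rw [hh]; exact h (i+1)

/-- prepend a low digit -/
lemma good_prepend {b d x : ℕ} (hb : 0 < b) (hd : d ≤ (b - 1) / 2) (hx : Good b x) :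
    Good b (d + b * x) := by
  have hdb : d < b := by omega
  intro i
  cases i with
  | zero =>
      simpa [Nat.add_mul_mod_self_left, Nat.mod_eq_of_lt hdb] using hd
  | succ j =>
      have h1 : (d + b * x) / b ^ (j + 1) = x / b ^ j := by
        rw [pow_succ, mul_comm (b^j) b, ← Nat.div_div_eq_div_mul,
          Nat.add_mul_div_left _ _ hb, Nat.div_eq_of_lt hdb, Nat.zero_add]
      rw [h1]; exact hx j

/-- add a high digit `d * b^j` above `u < b^j`. -/
lemma good_high_add {b d j u : ℕ} (hb : 0 < b) (hd : d ≤ (b - 1) / 2) (hu : u < b ^ j)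
    (hgu : Good b u) : Good b (d * b ^ j + u) := by
  have hdb : d < b := by omega
  intro i
  rcases lt_trichotomy i j with hij | hij | hij
  · -- i < j
    have hj : j = i + (j - i) := by omega
    have h1 : d * b ^ j + u = b ^ i * (d * b ^ (j - i)) + u := by
      conv_lhs => rw [hj]
      rw [pow_add]; ring
    have hbi : 0 < b ^ i := Nat.pow_pos hb
    rw [h1, Nat.mul_add_div hbi]
    have hji : j - i = (j - i - 1) + 1 := by omega
    have h2 : d * b ^ (j - i) = d * b ^ (j - i - 1) * b := by
      conv_lhs => rw [hji]
      rw [pow_succ]; ring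
    rw [h2, Nat.add_comm, Nat.add_mul_mod_self_right]
    exact hgu i
  · subst hij
    have hbi : 0 < b ^ i := Nat.pow_pos hb
    rw [Nat.add_comm, Nat.add_mul_div_right _ _ hbi, Nat.div_eq_of_lt hu, Nat.zero_add,
      Nat.mod_eq_of_lt hdb]
    exact hd
  · -- i > j : value < b^i
    have h3 : d * b ^ j + u < b ^ i := by
      have hd1 : (d + 1) * b ^ j = d * b ^ j + b ^ j := by ring
      have h4 : (d + 1) * b ^ j ≤ b * b ^ j := Nat.mul_le_mul_right _ (by omega)
      have h5 : b * b ^ j = b ^ (j + 1) := by rw [pow_succ]; ring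
      have h6 : b ^ (j + 1) ≤ b ^ i := Nat.pow_le_pow_right hb (by omega)
      omega
    simp [Nat.div_eq_of_lt h3]

/-- key consequence of goodness used for Kummer: no carries when adding n + n. -/
lemma good_two_mul_mod_lt {b n : ℕ} (hb : 1 < b) (h : Good b n) :
    ∀ i, 2 * (n % b ^ i) < b ^ i := by
  intro i
  induction i with
  | zero => simp [Nat.mod_one]
  | succ j ih =>
      have hbj : 0 < b ^ j := Nat.pow_pos (by omega)
      have hmodlt : n % b ^ j < b ^ j := Nat.mod_lt _ hbj
      have hdig : n / b ^ j % b < b := Nat.mod_lt _ (show 0 < b by omega)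
      have hlt : b ^ j * (n / b ^ j % b) + n % b ^ j < b ^ j * b := by
        have h3 : b ^ j * (n / b ^ j % b) ≤ b ^ j * (b - 1) := Nat.mul_le_mul_left _ (by omega)
        have h4 : b ^ j * (b-1) + b ^ j = b ^ j * b := by
          have : (b - 1) + 1 = b := by omega
          calc b ^ j * (b-1) + b ^ j = b ^ j * ((b-1) + 1) := by ring
          _ = b ^ j * b := by rw [this]
        omega
      have key : n % b ^ (j + 1) = b ^ j * (n / b ^ j % b) + n % b ^ j := by
        have hx : b ^ j * (n / b ^ j) + n % b ^ j = n := Nat.div_add_mod n (b ^ j)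
        calc n % b ^ (j+1) = n % (b ^ j * b) := by rw [pow_succ]
        _ = (b ^ j * (n / b ^ j) + n % b ^ j) % (b ^ j * b) := by rw [hx]
        _ = ((b ^ j * (n / b ^ j)) % (b ^ j * b) + (n % b ^ j) % (b ^ j * b)) % (b ^ j * b) :=
              Nat.add_mod _ _ _
        _ = (b ^ j * (n / b ^ j % b) + n % b ^ j) % (b ^ j * b) := by
              rw [Nat.mul_mod_mul_left]
              have hjb : b ^ j * 1 ≤ b ^ j * b := Nat.mul_le_mul_left _ (by omega)
              rw [Nat.mod_eq_of_lt (show n % b ^ j < b ^ j * b by omega)]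
        _ = b ^ j * (n / b ^ j % b) + n % b ^ j := Nat.mod_eq_of_lt hlt
      have hd : n / b ^ j % b ≤ (b - 1) / 2 := h j
      have h2d : 2 * (n / b ^ j % b) ≤ b - 1 := by omega
      have hstep : 2 * (b ^ j * (n / b ^ j % b)) ≤ b ^ j * (b - 1) := by
        calc 2 * (b ^ j * (n / b ^ j % b)) = b ^ j * (2 * (n / b ^ j % b)) := by ring
        _ ≤ b ^ j * (b - 1) := Nat.mul_le_mul_left _ h2d
      have hpow : b ^ (j+1) = b ^ j * b := pow_succ b j
      have hsplit : b ^ j * b = b ^ j * (b-1) + b ^ j := by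
        have hbb : (b-1) + 1 = b := by omega
        calc b ^ j * b = b ^ j * ((b-1) + 1) := by rw [hbb]
        _ = b ^ j * (b-1) + b ^ j := by ring
      omega

/-- The descent lemma. -/
lemma descent (p q : ℕ) (hp1 : 1 < p) (hq1 : 1 < q) (hpodd : p % 2 = 1) (hqodd : q % 2 = 1) :
    ∀ s k l m : ℕ, k + l ≤ s → 1 ≤ k → 1 ≤ l →
    p ^ (k - 1) ≤ q ^ l → q ^ (l - 1) ≤ p ^ k → 2 * m + 2 ≤ p ^ k + q ^ l →
    ∃ u v : ℕ, Good p u ∧ Good q v ∧ 2 * u + 1 ≤ p ^ k ∧ 2 * v + 1 ≤ q ^ l ∧ m = u + v := by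
  intro s
  induction s with
  | zero => intro k l m hs hk hl _ _ _; omega
  | succ s ih =>
      intro k l m hs hk hl hinv1 hinv2 hm
      by_cases hbase : k = 1 ∧ l = 1
      · obtain ⟨hk1, hl1⟩ := hbase
        subst hk1; subst hl1
        simp only [pow_one] at hm ⊢
        rcases le_or_gt m ((p-1)/2) with hmP | hmP
        · exact ⟨m, 0, good_small (by omega) hmP, good_zero q, by omega, by omega, by omega⟩
        · exact ⟨(p-1)/2, m - (p-1)/2, good_small (by omega) le_rfl,
            good_small (by omega) (by omega), by omega, by omega, by omega⟩
      · rcases le_or_gt (q ^ (l-1)) (p ^ (k-1)) with hc | hc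
        · -- case A : peel a top base-p digit; first show k ≥ 2
          have hk2 : 2 ≤ k := by
            by_contra hk1
            have hk1' : k = 1 := by omega
            subst hk1'
            simp only [Nat.sub_self, pow_zero] at hc
            have hl1 : l = 1 := by
              by_contra hl2
              have hll : 2 ≤ l := by omega
              have : q ≤ q ^ (l-1) := by
                calc q = q ^ 1 := (pow_one q).symm
                _ ≤ q ^ (l-1) := Nat.pow_le_pow_right (by omega) (by omega)
              omega
            exact hbase ⟨rfl, hl1⟩
          have hXpos : 0 < p ^ (k-1) := Nat.pow_pos (by omega)
          have hpk : p ^ k = p ^ (k-1) * p := by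
            rw [← pow_succ]
            congr 1
            omega
          have hP : 2 * ((p-1)/2) + 1 = p := by omega
          set X := p ^ (k-1) with hX
          set P := (p - 1) / 2 with hPdef
          set d := min P (m / X) with hd
          have hdP : d ≤ P := min_le_left _ _
          have hdm : d * X ≤ m := by
            have h1 : d ≤ m / X := min_le_right _ _
            calc d * X ≤ (m / X) * X := Nat.mul_le_mul_right _ h1
            _ ≤ m := Nat.div_mul_le_self _ _
          set r := m - d * X with hr
          have hrm : m = d * X + r := by omega
          -- bound on r
          have hrbound : 2 * r + 2 ≤ X + q ^ l := by
            rcases le_or_gt P (m / X) with hcap | hfree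
            · -- d = P
              have hdp : d = P := by omega
              have h2P : 2 * (d * X) = X * (2 * P) := by rw [hdp]; ring
              have hXP : X * (2 * P) + X = X * (2 * P + 1) := by ring
              have hXp : X * (2 * P + 1) = p ^ k := by rw [hP, ← hpk]
              omega
            · -- d = m / X, r = m % X < X
              have hdq : d = m / X := by omega
              have hda : d * X = X * (m / X) := by rw [hdq]; ring
              have hdm2 : X * (m / X) + m % X = m := Nat.div_add_mod m X
              have hmod : m % X < X := Nat.mod_lt _ hXpos
              have hXq : X ≤ q ^ l := hinv1
              omega
          -- recurse at (k-1, l, r)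
          obtain ⟨u', v, hgu', hgv, hu'b, hvb, hruv⟩ :=
            ih (k-1) l r (by omega) (by omega) hl
              (by
                have hh : p ^ (k-1-1) ≤ p ^ (k-1) := Nat.pow_le_pow_right (by omega) (by omega)
                omega)
              (by omega)
              (by omega)
          refine ⟨d * X + u', v, ?_, hgv, ?_, hvb, by omega⟩
          · rw [hX]
            exact good_high_add (by omega) hdP (by omega) hgu'
          · have h1 : d * X ≤ P * X := Nat.mul_le_mul_right _ hdP
            have h2 : 2 * (P * X) + X = p ^ k := by
              rw [hpk]
              calc 2 * (P * X) + X = X * (2 * P + 1) := by ring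
              _ = X * p := by rw [hP]
            omega
        · -- case B : peel a top base-q digit; l ≥ 2
          have hl2 : 2 ≤ l := by
            by_contra hl1
            have hl1' : l = 1 := by omega
            subst hl1'
            simp only [Nat.sub_self, pow_zero] at hc
            have : 1 ≤ p ^ (k-1) := Nat.pow_pos (by omega)
            omega
          have hYpos : 0 < q ^ (l-1) := Nat.pow_pos (by omega)
          have hql : q ^ l = q ^ (l-1) * q := by
            rw [← pow_succ]
            congr 1
            omega
          have hQ : 2 * ((q-1)/2) + 1 = q := by omega
          set Y := q ^ (l-1) with hY
          set Q := (q - 1) / 2 with hQdef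
          set e := min Q (m / Y) with he
          have heQ : e ≤ Q := min_le_left _ _
          have hem : e * Y ≤ m := by
            have h1 : e ≤ m / Y := min_le_right _ _
            calc e * Y ≤ (m / Y) * Y := Nat.mul_le_mul_right _ h1
            _ ≤ m := Nat.div_mul_le_self _ _
          set r := m - e * Y with hr
          have hrm : m = e * Y + r := by omega
          have hrbound : 2 * r + 2 ≤ p ^ k + Y := by
            rcases le_or_gt Q (m / Y) with hcap | hfree
            · have heq : e = Q := by omega
              have h2P : 2 * (e * Y) = Y * (2 * Q) := by rw [heq]; ring
              have hYQ : Y * (2 * Q) + Y = Y * (2 * Q + 1) := by ring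
              have hYq : Y * (2 * Q + 1) = q ^ l := by rw [hQ, ← hql]
              omega
            · have heq : e = m / Y := by omega
              have hea : e * Y = Y * (m / Y) := by rw [heq]; ring
              have hem2 : Y * (m / Y) + m % Y = m := Nat.div_add_mod m Y
              have hmod : m % Y < Y := Nat.mod_lt _ hYpos
              have hYp : Y ≤ p ^ k := hinv2
              omega
          obtain ⟨u, v', hgu, hgv', hub, hv'b, hruv⟩ :=
            ih k (l-1) r (by omega) hk (by omega)
              (by omega)
              (by
                have hh : q ^ (l-1-1) ≤ q ^ (l-1) := Nat.pow_le_pow_right (by omega) (by omega)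
                omega)
              (by omega)
          refine ⟨u, e * Y + v', hgu, ?_, hub, ?_, by omega⟩
          · rw [hY]
            exact good_high_add (by omega) heQ (by omega) hgv'
          · have h1 : e * Y ≤ Q * Y := Nat.mul_le_mul_right _ heQ
            have h2 : 2 * (Q * Y) + Y = q ^ l := by
              rw [hql]
              calc 2 * (Q * Y) + Y = Y * (2 * Q + 1) := by ring
              _ = Y * q := by rw [hQ]
            omega

/-- complementation: subtracting a good number from the all-max-digits number keeps goodness. -/
lemma good_compl (p : ℕ) (hp1 : 1 < p) (hpodd : p % 2 = 1) :
    ∀ K E u : ℕ, 2 * E + 1 = p ^ K → Good p u → 2 * u + 1 ≤ p ^ K → Good p (E - u) := by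
  intro K
  induction K with
  | zero =>
      intro E u hE hu hub
      simp only [pow_zero] at hE hub
      have hE0 : E - u = 0 := by omega
      rw [hE0]; exact good_zero p
  | succ K ihK =>
      intro E u hE hgu hub
      have hppow : p ^ (K+1) = p * p ^ K := by rw [pow_succ]; ring
      have hpKodd : p ^ K % 2 = 1 := by
        have hoddpk : Odd (p ^ K) := (Nat.odd_iff.mpr hpodd).pow
        exact Nat.odd_iff.mp hoddpk
      have hpKpos : 0 < p ^ K := Nat.pow_pos (by omega)
      have hE' : 2 * ((p ^ K - 1) / 2) + 1 = p ^ K := by omega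
      have hP : 2 * ((p - 1) / 2) + 1 = p := by omega
      set E' := (p ^ K - 1) / 2 with hE'def
      set P := (p - 1) / 2 with hPdef
      -- E = P + p * E'
      have hprod : (2 * P + 1) * (2 * E' + 1) = 4 * (P * E') + 2 * P + 2 * E' + 1 := by ring
      have hpE' : p * E' = 2 * (P * E') + E' := by
        calc p * E' = (2 * P + 1) * E' := by rw [hP]
        _ = 2 * (P * E') + E' := by ring
      have hEeq : E = P + p * E' := by
        have h1 : 2 * E + 1 = (2 * P + 1) * (2 * E' + 1) := by
          rw [hP, hE', hE, hppow]
        omega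
      -- decompose u
      have hud : p * (u / p) + u % p = u := Nat.div_add_mod u p
      have hdP : u % p ≤ P := by
        have hh := hgu 0
        simpa using hh
      have hgu' : Good p (u / p) := good_div hgu
      have hu'b : 2 * (u / p) + 1 ≤ p ^ K := by
        by_contra hcon
        push_neg at hcon
        have h1 : p ^ K ≤ 2 * (u / p) := by omega
        have h2 : p * p ^ K ≤ p * (2 * (u / p)) := Nat.mul_le_mul_left _ h1
        have h3 : p * (2 * (u / p)) = 2 * (p * (u / p)) := by ring
        omega
      have hu'E' : u / p ≤ E' := by omega
      have hsub : p * (E' - u / p) + p * (u / p) = p * E' := by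
        rw [← Nat.mul_add]
        congr 1
        omega
      have hkey : E - u = (P - u % p) + p * (E' - u / p) := by omega
      rw [hkey]
      exact good_prepend (by omega) (by omega) (ihK E' (u / p) hE' hgu' hu'b)

/-- auxiliary growth fact: `p^t * (p + t) ≤ p * (p+1)^t`. -/
lemma pow_succ_grow (p : ℕ) (hp : 1 ≤ p) : ∀ t, p ^ t * (p + t) ≤ p * (p + 1) ^ t := by
  intro t
  induction t with
  | zero => simp
  | succ t ih =>
      have h1 : p * (p+1) ^ (t+1) = (p+1) * (p * (p+1)^t) := by ring
      have h2 : (p+1) * (p ^ t * (p + t)) ≤ (p+1) * (p * (p+1)^t) :=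
        Nat.mul_le_mul_left _ ih
      have h3 : p ^ (t+1) * (p + (t+1)) ≤ (p+1) * (p ^ t * (p + t)) := by
        have expand : (p+1) * (p ^ t * (p + t)) = p ^ t * (p * p + p * t + p + t) := by ring
        have expand2 : p ^ (t+1) * (p + (t+1)) = p ^ t * (p * p + p * t + p) := by ring
        rw [expand, expand2]
        exact Nat.mul_le_mul_left _ (by omega)
      omega

lemma two_mul_pow_le (p : ℕ) (hp : 1 ≤ p) : 2 * p ^ p ≤ (p + 1) ^ p := by
  have h := pow_succ_grow p hp p
  have h2 : p * (2 * p ^ p) = p ^ p * (p + p) := by ring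
  have h3 : p * (2 * p ^ p) ≤ p * ((p+1) ^ p) := by rw [h2]; exact h
  exact Nat.le_of_mul_le_mul_left h3 (by omega)

/-- there are infinitely many K with a q-power wedged as q^(l-1) ≤ p^(K-1) < p^K < q^l. -/
lemma exists_scale_pair (p q : ℕ) (hp2 : 2 ≤ p) (hpq : p < q) (B : ℕ) :
    ∃ K l : ℕ, B ≤ K ∧ 1 ≤ l ∧ q ^ (l - 1) ≤ p ^ (K - 1) ∧ p ^ K < q ^ l := by
  by_contra hcon
  push_neg at hcon
  have hq2 : 2 ≤ q := by omega
  have hexists : ∀ K : ℕ, ∃ l, p ^ K < q ^ l := by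
    intro K
    refine ⟨p ^ K, ?_⟩
    calc p ^ K < 2 ^ (p ^ K) := Nat.lt_two_pow_self
    _ ≤ q ^ (p ^ K) := Nat.pow_le_pow_left hq2 _
  set f : ℕ → ℕ := fun K => Nat.find (hexists K) with hf
  have hfspec : ∀ K, p ^ K < q ^ (f K) := fun K => Nat.find_spec (hexists K)
  have hfmin : ∀ K j, j < f K → q ^ j ≤ p ^ K := by
    intro K j hj
    have hh := Nat.find_min (hexists K) hj
    omega
  have hf1 : ∀ K, 1 ≤ f K := by
    intro K
    by_contra h
    have h0 : f K = 0 := by omega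
    have hsp := hfspec K
    rw [h0] at hsp
    simp only [pow_zero] at hsp
    have : 1 ≤ p ^ K := Nat.pow_pos (by omega)
    omega
  have hbig : ∀ K, B ≤ K → p ^ (K - 1) < q ^ (f K - 1) := by
    intro K hK
    by_contra h
    push_neg at h
    have hc1 := hcon K (f K) hK (hf1 K) h
    have hc2 := hfspec K
    omega
  have hmono : ∀ K K', B ≤ K → K < K' → f K < f K' := by
    intro K K' hBK hKK'
    have h1 : q ^ (f K - 1) ≤ p ^ K := hfmin K (f K - 1) (by have := hf1 K; omega)
    have h2 : p ^ K ≤ p ^ (K' - 1) := Nat.pow_le_pow_right (by omega) (by omega)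
    have h3 : p ^ (K' - 1) < q ^ (f K' - 1) := hbig K' (by omega)
    have h4 : q ^ (f K - 1) < q ^ (f K' - 1) := by omega
    have h5 := (Nat.pow_lt_pow_iff_right (by omega : 1 < q)).mp h4
    omega
  have hgrow : ∀ s : ℕ, s + 1 ≤ f (B + s) := by
    intro s
    induction s with
    | zero => simpa using hf1 B
    | succ s ihs =>
        have := hmono (B + s) (B + (s + 1)) (by omega) (by omega)
        omega
  have hcontr : ∀ s : ℕ, q ^ s ≤ p ^ (B + s) := by
    intro s
    have h1 : q ^ s ≤ q ^ (f (B + s) - 1) := by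
      apply Nat.pow_le_pow_right (by omega)
      have := hgrow s
      omega
    have h2 : q ^ (f (B + s) - 1) ≤ p ^ (B + s) :=
      hfmin (B + s) _ (by have := hf1 (B + s); omega)
    omega
  set m := p ^ B with hm
  have hm2 : m < 2 ^ m := Nat.lt_two_pow_self
  set s := p * m with hs
  have hqp : (p + 1) ^ s ≤ q ^ s := Nat.pow_le_pow_left (by omega) _
  have hps : (p + 1) ^ s = ((p + 1) ^ p) ^ m := by rw [← pow_mul]
  have h2p : (2 * p ^ p) ^ m ≤ ((p + 1) ^ p) ^ m :=
    Nat.pow_le_pow_left (two_mul_pow_le p (by omega)) _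
  have hexp : (2 * p ^ p) ^ m = 2 ^ m * p ^ s := by
    rw [mul_pow, ← pow_mul]
  have hfinal : 2 ^ m * p ^ s ≤ q ^ s := by
    calc 2 ^ m * p ^ s = (2 * p ^ p) ^ m := hexp.symm
    _ ≤ ((p+1)^p)^m := h2p
    _ = (p+1)^s := hps.symm
    _ ≤ q ^ s := hqp
  have hcon2 : q ^ s ≤ p ^ (B + s) := hcontr s
  have hpBs : p ^ (B + s) = m * p ^ s := by rw [pow_add]
  have hppos : 0 < p ^ s := Nat.pow_pos (by omega)
  have hle : 2 ^ m * p ^ s ≤ m * p ^ s := by omega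
  have hle2 : 2 ^ m ≤ m := Nat.le_of_mul_le_mul_right hle hppos
  omega

/-- Kummer: a number that is `Good` for prime `p` yields `p ∤ C(2n,n)`. -/
lemma not_dvd_centralBinom {p n : ℕ} (hp : p.Prime) (hgood : ∀ i, 2 * (n % p ^ i) < p ^ i) :
    ¬ p ∣ Nat.choose (2 * n) n := by
  have hkn : n ≤ 2 * n := by omega
  have hb : Nat.log p (2 * n) < Nat.log p (2 * n) + 1 := Nat.lt_succ_self _
  have hmult := Nat.Prime.emultiplicity_choose hp hkn hb
  have hfilter :
      {i ∈ Finset.Ico 1 (Nat.log p (2*n) + 1) | p ^ i ≤ n % p ^ i + (2 * n - n) % p ^ i} = ∅ := by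
    apply Finset.filter_false_of_mem
    intro i _
    have h2n : 2 * n - n = n := by omega
    rw [h2n]
    have := hgood i
    omega
  rw [hfilter] at hmult
  simp only [Finset.card_empty, Nat.cast_zero] at hmult
  exact emultiplicity_eq_zero.mp hmult

/-- main asymmetric statement -/
theorem main_asym (p q : ℕ) (hp : p.Prime) (hq : q.Prime)
    (hp2 : 2 < p) (hq2 : 2 < q) (hlt : p < q) :
    {N : ℕ | 0 < N ∧ Nat.gcd (Nat.choose (2 * N) N) (p * q) = 1}.Infinite := by
  apply Set.infinite_of_not_bddAbove
  rintro ⟨B, hB⟩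
  have hpodd : p % 2 = 1 := Nat.odd_iff.mp (hp.odd_of_ne_two (by omega))
  have hqodd : q % 2 = 1 := Nat.odd_iff.mp (hq.odd_of_ne_two (by omega))
  obtain ⟨K, l, hKB, hl1, hinv1, hKl⟩ := exists_scale_pair p q (by omega) hlt (B + 2)
  have hK2 : 2 ≤ K := by omega
  have hpKodd : p ^ K % 2 = 1 := Nat.odd_iff.mp ((Nat.odd_iff.mpr hpodd).pow)
  have hpKpos : 1 ≤ p ^ K := Nat.pow_pos (by omega)
  set m := (p ^ K - 1) / 2 with hm
  have hmK : 2 * m + 1 = p ^ K := by omega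
  have hdK : p ^ (K - 1 - 1) ≤ q ^ l := by
    have h1 : p ^ (K - 1 - 1) ≤ p ^ K := Nat.pow_le_pow_right (by omega) (by omega)
    omega
  have hpK1K : p ^ (K - 1) ≤ p ^ K := Nat.pow_le_pow_right (by omega) (by omega)
  have hsize : 2 * m + 2 ≤ p ^ (K - 1) + q ^ l := by
    have h1 : 1 ≤ p ^ (K-1) := Nat.pow_pos (by omega)
    omega
  obtain ⟨u, v, hgu, hgv, hub, hvb, huv⟩ :=
    descent p q (by omega) (by omega) hpodd hqodd ((K - 1) + l) (K - 1) l m le_rfl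
      (by omega) hl1 hdK hinv1 hsize
  have hgv_p : Good p v := by
    have hveq : v = m - u := by omega
    rw [hveq]
    exact good_compl p (by omega) hpodd K m u hmK hgu (by omega)
  have hpKbig : 2 * p ^ (K - 1) ≤ p ^ K := by
    have h1 : p ^ K = p ^ (K - 1) * p := by
      rw [← pow_succ]
      congr 1
      omega
    have h2 : p ^ (K-1) * 2 ≤ p ^ (K-1) * p := Nat.mul_le_mul_left _ (by omega)
    omega
  have h2v : p ^ (K - 1) ≤ 2 * v := by omega
  have hvB : B < v := by
    have h1 : 2 ^ (K - 1) ≤ p ^ (K - 1) := Nat.pow_le_pow_left (by omega) _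
    have h2 : 2 ^ (B + 1) ≤ 2 ^ (K - 1) := Nat.pow_le_pow_right (by omega) (by omega)
    have h3 : B < 2 ^ B := Nat.lt_two_pow_self
    have h4 : 2 ^ (B + 1) = 2 * 2 ^ B := by rw [pow_succ]; ring
    omega
  have hmem : v ∈ {N : ℕ | 0 < N ∧ Nat.gcd (Nat.choose (2 * N) N) (p * q) = 1} := by
    constructor
    · omega
    · have hcp : ¬ p ∣ Nat.choose (2 * v) v :=
        not_dvd_centralBinom hp (good_two_mul_mod_lt (by omega) hgv_p)
      have hcq : ¬ q ∣ Nat.choose (2 * v) v :=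
        not_dvd_centralBinom hq (good_two_mul_mod_lt (by omega) hgv)
      have h1 : Nat.Coprime (Nat.choose (2 * v) v) p :=
        ((Nat.Prime.coprime_iff_not_dvd hp).mpr hcp).symm
      have h2 : Nat.Coprime (Nat.choose (2 * v) v) q :=
        ((Nat.Prime.coprime_iff_not_dvd hq).mpr hcq).symm
      exact Nat.Coprime.mul_right h1 h2
  have := hB hmem
  omega

end EGRSAux

/-- For two fixed, distinct odd primes `p, q`, there are infinitely many
positive integers `N` with `gcd (C(2N,N), p*q) = 1`. -/
theorem infinitely_many_coprime_centralBinom_two_primes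
    (p q : ℕ) (hp : p.Prime) (hq : q.Prime)
    (hp2 : 2 < p) (hq2 : 2 < q) (hpq : p ≠ q) :
    {N : ℕ | 0 < N ∧ Nat.gcd (Nat.choose (2 * N) N) (p * q) = 1}.Infinite := by
  rcases hpq.lt_or_gt with h | h
  · exact EGRSAux.main_asym p q hp hq hp2 hq2 h
  · have h2 := EGRSAux.main_asym q p hq hp hq2 hp2 h
    simpa only [Nat.mul_comm q p] using h2
end

section
/- Let p be an odd prime and A a positive integer with A < p − 1. Then for every positive integer a, the real interval [a, ((p−1)/A)·a) contains a (p,A)-good number; that is, there exists a positive integer n with a ≤ n and n·A < (p−1)·a such that every base-p digit of n is at most A. -/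
/-- For an odd prime `p` and a positive integer `A < p - 1`, every interval
`[a, ((p-1)/A) * a)` contains a `(p,A)`-good number. -/
theorem good_number_in_interval
    (p A a : ℕ) (hp : p.Prime) (hp2 : 2 < p)
    (hA : 0 < A) (hAp : A < p - 1) (ha : 0 < a) :
    ∃ n : ℕ, 0 < n ∧ a ≤ n ∧ n * A < (p - 1) * a ∧
      ∀ d ∈ Nat.digits p n, d ≤ A := by
  have hq : 0 < p - 1 := by omega
  have hp1 : 1 < p := by omega
  -- Key lemma: successor-type bound for good numbers
  have key : ∀ m : ℕ, (∀ d ∈ Nat.digits p m, d ≤ A) →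
      ∃ n, (∀ d ∈ Nat.digits p n, d ≤ A) ∧ m < n ∧
        A * (p-1) * n ≤ (p-1)^2 * m + A * (p-1) := by
    intro m
    induction m using Nat.strong_induction_on with
    | _ m ih =>
      intro hm
      by_cases hcase : m % p < A
      · refine ⟨m + 1, ?_, Nat.lt_succ_self m, ?_⟩
        · have hlt : m % p + 1 < p := by
            have := Nat.mod_lt m (show 0 < p by omega); omega
          have h1 : (m+1) % p = m % p + 1 := by
            rw [Nat.add_mod, Nat.one_mod_eq_one.mpr (by omega), Nat.mod_eq_of_lt hlt]
          have h2 : (m+1) / p = m / p := by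
            rw [Nat.succ_div, if_neg, add_zero]
            intro hdvd
            have := Nat.eq_zero_of_dvd_of_lt hdvd
            have h0 : (m+1) % p = 0 := Nat.eq_zero_of_dvd_of_lt hdvd |> fun _ => (Nat.mod_eq_zero_of_dvd hdvd)
            omega
          have hd : Nat.digits p (m+1) = (m % p + 1) :: Nat.digits p (m / p) := by
            rw [Nat.digits_def' hp1 (Nat.succ_pos m), h1, h2]
          have hgood' : ∀ d ∈ Nat.digits p (m / p), d ≤ A := by
            rcases Nat.eq_zero_or_pos m with h0 | h0
            · simp [h0]
            · intro d hd''
              exact hm d (by rw [Nat.digits_def' hp1 h0]; exact List.mem_cons_of_mem _ hd'')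
          · intro d hd'
            rw [hd] at hd'
            rcases List.mem_cons.mp hd' with h | h
            · omega
            · exact hgood' d h
        · nlinarith [mul_le_mul_left (show A ≤ p-1 by omega) ((p-1)*m)]
      · have hm0 : 0 < m := by
          rcases Nat.eq_zero_or_pos m with h0 | h0
          · exfalso; apply hcase; simp [h0]; omega
          · exact h0
        have hhead : m % p ≤ A :=
          hm _ (by rw [Nat.digits_def' hp1 hm0]; exact List.mem_cons_self)
        have heq : m % p = A := by omega
        have hmlt : m / p < m := Nat.div_lt_self hm0 hp1
        have hgood' : ∀ d ∈ Nat.digits p (m / p), d ≤ A := fun d hd =>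
          hm d (by rw [Nat.digits_def' hp1 hm0]; exact List.mem_cons_of_mem _ hd)
        obtain ⟨n', hn'good, hn'lt, hn'ineq⟩ := ih (m / p) hmlt hgood'
        have hn'pos : 0 < n' := lt_of_le_of_lt (Nat.zero_le _) hn'lt
        have hdm : p * (m / p) + m % p = m := Nat.div_add_mod m p
        refine ⟨p * n', ?_, ?_, ?_⟩
        · have hd : Nat.digits p (p * n') = 0 :: Nat.digits p n' := by
            rw [Nat.digits_def' hp1 (by positivity), Nat.mul_mod_right,
              Nat.mul_div_cancel_left n' (by omega)]
          intro d hd'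
          rw [hd] at hd'
          rcases List.mem_cons.mp hd' with h | h
          · omega
          · exact hn'good d h
        · have h4 : p * (m / p) + p ≤ p * n' := by
            have := Nat.mul_le_mul_left p hn'lt
            nlinarith
          linarith [hdm, show A < p by omega]
        · have hfin : ∀ q u n' m : ℕ, A*q*n' ≤ q^2*u + A*q → (q+1)*u + A = m →
              A*q*((q+1)*n') ≤ q^2*m + A*q := by
            intro q u n' m h1 h2
            have h3 := Nat.mul_le_mul_left (q+1) h1
            nlinarith
          have heqm : ((p-1)+1) * (m / p) + A = m := by
            rw [show (p-1)+1 = p by omega, ← heq]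
            exact hdm
          have := hfin (p-1) (m / p) n' m hn'ineq heqm
          rwa [show (p-1)+1 = p by omega] at this
  by_cases hga : ∀ d ∈ Nat.digits p a, d ≤ A
  · refine ⟨a, ha, le_refl a, ?_, hga⟩
    rw [mul_comm]
    exact Nat.mul_lt_mul_of_lt_of_le hAp (le_refl a) ha
  · have h0s : 0 ∈ Finset.filter (fun m => ∀ d ∈ Nat.digits p m, d ≤ A) (Finset.range a) := by
      simp [Finset.mem_filter, ha]
    set s := Finset.filter (fun m => ∀ d ∈ Nat.digits p m, d ≤ A) (Finset.range a) with hs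
    have hsne : s.Nonempty := ⟨0, h0s⟩
    set m := s.max' hsne with hmdef
    have hmmem : m ∈ s := s.max'_mem hsne
    have hm2 := Finset.mem_filter.mp hmmem
    have hma : m < a := Finset.mem_range.mp hm2.1
    have hmgood := hm2.2
    obtain ⟨n, hngood, hmn, hineq⟩ := key m hmgood
    have hna : a ≤ n := by
      by_contra h
      push_neg at h
      have hns : n ∈ s := by rw [hs, Finset.mem_filter, Finset.mem_range]; exact ⟨h, hngood⟩
      have := s.le_max' n hns
      omega
    have h5 : (p-1)*(A*n) ≤ (p-1)*((p-1)*m + A) := by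
      calc (p-1)*(A*n) = A*(p-1)*n := by ring
        _ ≤ (p-1)^2*m + A*(p-1) := hineq
        _ = (p-1)*((p-1)*m + A) := by ring
    have h6 : A*n ≤ (p-1)*m + A := Nat.le_of_mul_le_mul_left h5 hq
    have h7 : n * A < (p-1) * a := by
      have h8 : (p-1)*(m+1) ≤ (p-1)*a := Nat.mul_le_mul_left _ (by omega)
      have h9 : (p-1)*(m+1) = (p-1)*m + (p-1) := by ring
      have h10 : n * A = A * n := by ring
      linarith [hAp]
    exact ⟨n, by omega, hna, h7, hngood⟩
end

section
/- Let q be an odd prime, B a positive integer with q ≤ 2B and B ≤ q − 1, and κ a positive integer. Then the number S′ = q^κ − B·(q^κ − 1)/(q − 1) is a positive integer, satisfies S′ = ((q − B − 1)/(q − 1))·(q^κ − 1) + 1, and is a (q,B)-good number, i.e., every base-q digit of S′ is at most B. -/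
open Finset

lemma geom_mul_nat (q : ℕ) (hq : 1 ≤ q) (n : ℕ) :
    (q - 1) * ∑ i ∈ range n, q ^ i = q ^ n - 1 := by
  induction n with
  | zero => simp
  | succ n ih =>
    rw [Finset.sum_range_succ, Nat.mul_add, ih, pow_succ]
    have h1 : 1 ≤ q ^ n := Nat.one_le_pow _ _ hq
    have h2 : q ^ n ≤ q ^ n * q := Nat.le_mul_of_pos_right _ hq
    have h3 : (q - 1) * q ^ n = q ^ n * q - q ^ n := by
      rw [Nat.sub_one_mul, mul_comm]
    omega

lemma digits_cons_of (q c m : ℕ) (hq : 1 < q) (hc : c < q) (hpos : 0 < c + q * m) :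
    Nat.digits q (c + q * m) = c :: Nat.digits q m := by
  rw [Nat.digits_def' hq hpos, Nat.add_mul_mod_self_left, Nat.mod_eq_of_lt hc,
    Nat.add_mul_div_left _ _ (by omega : 0 < q), Nat.div_eq_of_lt hc, Nat.zero_add]

lemma digits_g (q B : ℕ) (hq2 : 2 < q) (hB : 0 < B) (hqB : q ≤ 2 * B) (hBq : B ≤ q - 1) :
    ∀ k, ∀ d ∈ Nat.digits q ((q - B - 1) * ∑ i ∈ range k, q ^ i), d ≤ B := by
  intro k
  induction k with
  | zero => simp
  | succ k ih =>
    rcases Nat.eq_zero_or_pos (q - B - 1) with h0 | h0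
    · simp [h0]
    · have hrw : (q - B - 1) * ∑ i ∈ range (k + 1), q ^ i
          = (q - B - 1) + q * ((q - B - 1) * ∑ i ∈ range k, q ^ i) := by
        rw [_root_.geom_sum_succ]
        ring
      rw [hrw, digits_cons_of q _ _ (by omega) (by omega) (by omega)]
      intro d hd
      rcases List.mem_cons.mp hd with h | h
      · omega
      · exact ih d h

/-- For an odd prime `q`, a positive integer `B` with `q ≤ 2B` and `B ≤ q - 1`,
and a positive integer `κ`, the number `S' = q^κ - B * (q^κ - 1)/(q - 1)` is a
positive integer, equals `((q - B - 1)/(q - 1)) * (q^κ - 1) + 1`, and is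
`(q,B)`-good. -/
theorem S_prime_is_good
    (q B κ : ℕ) (hq : q.Prime) (hq2 : 2 < q)
    (hB : 0 < B) (hqB : q ≤ 2 * B) (hBq : B ≤ q - 1) (hκ : 0 < κ) :
    0 < q ^ κ - B * ((q ^ κ - 1) / (q - 1)) ∧
    q ^ κ - B * ((q ^ κ - 1) / (q - 1)) = (q - B - 1) * ((q ^ κ - 1) / (q - 1)) + 1 ∧
    ∀ d ∈ Nat.digits q (q ^ κ - B * ((q ^ κ - 1) / (q - 1))), d ≤ B := by
  have hq1 : 1 ≤ q := by omega
  have hR : (q ^ κ - 1) / (q - 1) = ∑ i ∈ range κ, q ^ i :=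
    (Nat.geomSum_eq (by omega) κ).symm
  rw [hR]
  have hpow : q ^ κ = (q - 1) * ∑ i ∈ range κ, q ^ i + 1 := by
    have h := geom_mul_nat q hq1 κ
    have h1 : 1 ≤ q ^ κ := Nat.one_le_pow _ _ hq1
    omega
  have hmul : B * ∑ i ∈ range κ, q ^ i ≤ (q - 1) * ∑ i ∈ range κ, q ^ i :=
    Nat.mul_le_mul_right _ hBq
  have hkey : q ^ κ - B * ∑ i ∈ range κ, q ^ i
      = (q - B - 1) * (∑ i ∈ range κ, q ^ i) + 1 := by
    have e4 : q - B - 1 = q - 1 - B := by omega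
    rw [e4, Nat.sub_mul]
    omega
  refine ⟨by omega, hkey, ?_⟩
  rw [hkey]
  obtain ⟨k, rfl⟩ : ∃ k, κ = k + 1 := ⟨κ - 1, by omega⟩
  have hrw : (q - B - 1) * (∑ i ∈ range (k + 1), q ^ i) + 1
      = (q - B) + q * ((q - B - 1) * ∑ i ∈ range k, q ^ i) := by
    rw [_root_.geom_sum_succ]
    have h5 : (q - B - 1) * (q * (∑ i ∈ range k, q ^ i) + 1) + 1
        = (q - B - 1 + 1) + q * ((q - B - 1) * ∑ i ∈ range k, q ^ i) := by ring
    rw [h5]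
    congr 1
    omega
  rw [hrw, digits_cons_of q _ _ (by omega) (by omega) (by omega)]
  intro d hd
  rcases List.mem_cons.mp hd with h | h
  · omega
  · exact digits_g q B hq2 hB hqB hBq k d h
end
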